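/- In the common-panel factor-model setup, suppose α₁ > α₂. Then a_{1,p}/a_{2,p} → 0 as p → ∞ and, for every x > 0, P(Q_p ≤ a_{2,p} x) → Ψ_{α₂}(x) as p → ∞. (Corollary 1, third case.) -/

import Mathlib

open MeasureTheory ProbabilityTheory Filter

noncomputable section

/-- The Fréchet distribution function with tail index `α`. -/
def frechetCDF (α x : ℝ) : ℝ := if 0 < x then Real.exp (-x ^ (-α)) else 0

/-- The norming constant `a_p = (Σ_{i<p} σ_i^α)^{1/α}`. -/
def normConst (σ : ℕ → ℝ) (α : ℝ) (p : ℕ) : ℝ :=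
  (∑ i ∈ Finset.range p, σ i ^ α) ^ (1 / α)

/-- Maximum of the first `p₁` variables of the first group and the first `p₂`
variables of the second group. -/
def Qmax {Ω : Type*} (X₁ X₂ : ℕ → Ω → ℝ) (p₁ p₂ : ℕ) (ω : Ω) : ℝ :=
  max (⨆ i : Fin p₁, X₁ i ω) (⨆ j : Fin p₂, X₂ j ω)

/-- Codomains of the family consisting of the factor `Z` and the two noise arrays. -/
def mixCodom (d : ℕ) : Unit ⊕ ℕ ⊕ ℕ → Type
  | Sum.inl _ => Fin d → ℝ
  | Sum.inr _ => ℝ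

instance mixCodomMeasurableSpace (d : ℕ) : ∀ i, MeasurableSpace (mixCodom d i)
  | Sum.inl _ => inferInstanceAs (MeasurableSpace (Fin d → ℝ))
  | Sum.inr (Sum.inl _) => inferInstanceAs (MeasurableSpace ℝ)
  | Sum.inr (Sum.inr _) => inferInstanceAs (MeasurableSpace ℝ)

/-- The family consisting of the factor `Z` and the two noise arrays. -/
def mixFun {Ω : Type*} {d : ℕ} (Z : Ω → Fin d → ℝ) (ε₁ ε₂ : ℕ → Ω → ℝ) :
    ∀ i : Unit ⊕ ℕ ⊕ ℕ, Ω → mixCodom d i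
  | Sum.inl _ => Z
  | Sum.inr (Sum.inl i) => ε₁ i
  | Sum.inr (Sum.inr j) => ε₂ j

open scoped ENNReal

lemma normConst_ge {σ : ℕ → ℝ} {C₁ : ℝ} (hC₁ : 0 < C₁) (hσ : ∀ i, C₁ ≤ σ i)
    {α : ℝ} (hα : 0 < α) (p : ℕ) : C₁ * (p : ℝ) ^ (1 / α) ≤ normConst σ α p := by
  have hsum : (p : ℝ) * C₁ ^ α ≤ ∑ i ∈ Finset.range p, σ i ^ α := by
    calc (p : ℝ) * C₁ ^ α = ∑ _i ∈ Finset.range p, C₁ ^ α := by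
          simp [Finset.sum_const, mul_comm]
      _ ≤ ∑ i ∈ Finset.range p, σ i ^ α :=
          Finset.sum_le_sum fun i _ => Real.rpow_le_rpow hC₁.le (hσ i) hα.le
  have h1 : (0:ℝ) ≤ (p : ℝ) * C₁ ^ α := by positivity
  have := Real.rpow_le_rpow h1 hsum (by positivity : (0:ℝ) ≤ 1/α)
  calc C₁ * (p : ℝ) ^ (1/α) = ((p : ℝ) * C₁ ^ α) ^ (1/α) := by
        rw [Real.mul_rpow (by positivity) (by positivity), ← Real.rpow_mul hC₁.le,
          mul_one_div, div_self hα.ne', Real.rpow_one, mul_comm]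
    _ ≤ normConst σ α p := this

lemma normConst_le {σ : ℕ → ℝ} {C₂ : ℝ} (hC₂ : 0 < C₂) (hσ : ∀ i, 0 ≤ σ i) (hσ' : ∀ i, σ i ≤ C₂)
    {α : ℝ} (hα : 0 < α) (p : ℕ) : normConst σ α p ≤ C₂ * (p : ℝ) ^ (1 / α) := by
  have hsum : ∑ i ∈ Finset.range p, σ i ^ α ≤ (p : ℝ) * C₂ ^ α := by
    calc ∑ i ∈ Finset.range p, σ i ^ α ≤ ∑ _i ∈ Finset.range p, C₂ ^ α :=
          Finset.sum_le_sum fun i _ => Real.rpow_le_rpow (hσ i) (hσ' i) hα.le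
      _ = (p : ℝ) * C₂ ^ α := by simp [Finset.sum_const, mul_comm]
  have h1 : (0:ℝ) ≤ ∑ i ∈ Finset.range p, σ i ^ α :=
    Finset.sum_nonneg fun i _ => Real.rpow_nonneg (hσ i) _
  have := Real.rpow_le_rpow h1 hsum (by positivity : (0:ℝ) ≤ 1/α)
  calc normConst σ α p ≤ ((p : ℝ) * C₂ ^ α) ^ (1/α) := this
    _ = C₂ * (p : ℝ) ^ (1/α) := by
        rw [Real.mul_rpow (by positivity) (by positivity), ← Real.rpow_mul hC₂.le,
          mul_one_div, div_self hα.ne', Real.rpow_one, mul_comm]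

lemma normConst_pos {σ : ℕ → ℝ} {C₁ : ℝ} (hC₁ : 0 < C₁) (hσ : ∀ i, C₁ ≤ σ i)
    {α : ℝ} (hα : 0 < α) {p : ℕ} (hp : 1 ≤ p) : 0 < normConst σ α p := by
  have := normConst_ge hC₁ hσ hα p
  have hp' : (1:ℝ) ≤ (p:ℝ) := by exact_mod_cast hp
  nlinarith [Real.one_le_rpow hp' (by positivity : (0:ℝ) ≤ 1/α)]

lemma normConst_tendsto_atTop {σ : ℕ → ℝ} {C₁ : ℝ} (hC₁ : 0 < C₁) (hσ : ∀ i, C₁ ≤ σ i)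
    {α : ℝ} (hα : 0 < α) : Tendsto (fun p : ℕ => normConst σ α p) atTop atTop := by
  refine tendsto_atTop_mono (normConst_ge hC₁ hσ hα) ?_
  have h := (tendsto_rpow_atTop (by positivity : (0:ℝ) < 1/α)).comp
    (tendsto_natCast_atTop_atTop (R := ℝ))
  exact Tendsto.const_mul_atTop hC₁ h

lemma normConst_ratio_tendsto {σ : ℕ → ℝ} {C₁ C₂ : ℝ} (hC₁ : 0 < C₁) (hC₁₂ : C₁ ≤ C₂)
    (hσ : ∀ i, σ i ∈ Set.Icc C₁ C₂) {α₁ α₂ : ℝ} (hα₁ : 0 < α₁) (hα₂ : 0 < α₂) (hα : α₂ < α₁) :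
    Tendsto (fun p : ℕ => normConst σ α₁ p / normConst σ α₂ p) atTop (nhds 0) := by
  have hσ1 : ∀ i, C₁ ≤ σ i := fun i => (hσ i).1
  have hσ0 : ∀ i, (0:ℝ) ≤ σ i := fun i => hC₁.le.trans (hσ1 i)
  have hσ2 : ∀ i, σ i ≤ C₂ := fun i => (hσ i).2
  have hC₂ : 0 < C₂ := hC₁.trans_le hC₁₂
  have hβ : 1/α₁ - 1/α₂ < 0 := by
    have : 1/α₁ < 1/α₂ := by
      apply div_lt_div_of_pos_left one_pos hα₂ hα
    linarith
  have hlim : Tendsto (fun p : ℕ => (C₂/C₁) * (p:ℝ) ^ (1/α₁ - 1/α₂)) atTop (nhds 0) := by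
    have h := (tendsto_rpow_neg_atTop (y := -(1/α₁ - 1/α₂)) (by linarith)).comp
      (tendsto_natCast_atTop_atTop (R := ℝ))
    simp only [neg_neg] at h
    simpa using h.const_mul (C₂/C₁)
  apply tendsto_of_tendsto_of_tendsto_of_le_of_le' tendsto_const_nhds hlim
  · filter_upwards [eventually_ge_atTop 1] with p hp
    have h1 := normConst_pos hC₁ hσ1 hα₁ hp
    have h2 := normConst_pos hC₁ hσ1 hα₂ hp
    positivity
  · filter_upwards [eventually_ge_atTop 1] with p hp
    have hppos : (0:ℝ) < (p:ℝ) := by exact_mod_cast hp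
    have h2 := normConst_ge hC₁ hσ1 hα₂ p
    have h2' : 0 < C₁ * (p:ℝ) ^ (1/α₂) := by positivity
    calc normConst σ α₁ p / normConst σ α₂ p
        ≤ (C₂ * (p:ℝ) ^ (1/α₁)) / (C₁ * (p:ℝ) ^ (1/α₂)) := by
          apply div_le_div₀ (by positivity) (normConst_le hC₂ hσ0 hσ2 hα₁ p) h2' h2
      _ = (C₂/C₁) * (p:ℝ) ^ (1/α₁ - 1/α₂) := by
          rw [Real.rpow_sub hppos]
          field_simp

lemma le_neg_log {T : ℝ} (h1 : T < 1) : T ≤ -Real.log (1 - T) := by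
  have h : 0 < 1 - T := by linarith
  have := Real.log_le_sub_one_of_pos h
  linarith

lemma neg_log_nonneg {T : ℝ} (h0 : 0 ≤ T) (h1 : T ≤ 1) : 0 ≤ -Real.log (1 - T) := by
  have := Real.log_nonpos (x := 1 - T) (by linarith) (by linarith)
  linarith

lemma neg_log_le {T δ : ℝ} (hδ : 0 < δ) (h0 : 0 ≤ T) (h1 : T ≤ δ/(1+δ)) :
    -Real.log (1 - T) ≤ (1+δ) * T := by
  have hδ1 : 0 < 1 + δ := by linarith
  have h2 : 1/(1+δ) ≤ 1 - T := by
    rw [div_le_iff₀ hδ1]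
    have h3 : T * (1+δ) ≤ δ := by rwa [← le_div_iff₀ hδ1]
    nlinarith
  have hT1 : 0 < 1 - T := lt_of_lt_of_le (by positivity) h2
  have hlog : -Real.log (1 - T) ≤ T / (1 - T) := by
    have := Real.log_le_sub_one_of_pos (inv_pos.mpr hT1)
    rw [Real.log_inv] at this
    have hinv : (1-T)⁻¹ - 1 = T/(1-T) := by field_simp; ring
    linarith
  have h3 : 1 ≤ (1-T)*(1+δ) := (div_le_iff₀ hδ1).mp h2
  have h4 : T / (1 - T) ≤ (1+δ)*T := by
    rw [div_le_iff₀ hT1]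
    nlinarith [mul_le_mul_of_nonneg_left h3 h0]
  linarith

lemma tail_bounds {T : ℝ → ℝ} {α : ℝ} (hα : 0 < α)
    (ht : Filter.Tendsto (fun y : ℝ => y ^ α * T y) atTop (nhds 1)) {δ : ℝ} (hδ : 0 < δ) :
    ∀ᶠ y in atTop, (1 - δ) * y ^ (-α) ≤ T y ∧ T y ≤ (1 + δ) * y ^ (-α) := by
  have h := ht.eventually (Ioo_mem_nhds (by linarith : (1:ℝ)-δ < 1) (by linarith : (1:ℝ) < 1+δ))
  filter_upwards [h, eventually_gt_atTop (0:ℝ)] with y hy hy0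
  have hA : 0 < y ^ α := Real.rpow_pos_of_pos hy0 _
  have hneg : y ^ (-α) = (y ^ α)⁻¹ := Real.rpow_neg hy0.le _
  obtain ⟨h1, h2⟩ := hy
  constructor
  · rw [hneg, mul_inv_le_iff₀ hA]
    nlinarith
  · rw [hneg, ← div_eq_mul_inv, le_div_iff₀ hA]
    nlinarith

lemma div_rpow_neg {b s γ : ℝ} (hb : 0 ≤ b) (hs : 0 < s) : (b/s) ^ (-γ) = s ^ γ * b ^ (-γ) := by
  rw [Real.div_rpow hb hs.le, Real.rpow_neg hb, Real.rpow_neg hs.le, div_eq_mul_inv, inv_inv,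
    mul_comm]

lemma div_rpow_eq {a b γ : ℝ} (ha : 0 ≤ a) (hb : 0 < b) : (a/b)^γ = a^γ * b^(-γ) := by
  rw [Real.div_rpow ha hb.le, Real.rpow_neg hb.le, div_eq_mul_inv]

lemma core_prod_tendsto
    (σ : ℕ → ℝ) (C₁ C₂ : ℝ) (hC₁ : 0 < C₁) (hC₁₂ : C₁ ≤ C₂) (hσ : ∀ i, σ i ∈ Set.Icc C₁ C₂)
    (α₁ α₂ : ℝ) (hα₁ : 0 < α₁) (hα₂ : 0 < α₂) (hα : α₂ < α₁)
    (T₁ T₂ : ℝ → ℝ)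
    (hT₁01 : ∀ y, T₁ y ∈ Set.Icc (0:ℝ) 1) (hT₂01 : ∀ y, T₂ y ∈ Set.Icc (0:ℝ) 1)
    (htail₁ : Tendsto (fun y : ℝ => y ^ α₁ * T₁ y) atTop (nhds 1))
    (htail₂ : Tendsto (fun y : ℝ => y ^ α₂ * T₂ y) atTop (nhds 1))
    (x M : ℝ) (hx : 0 < x) (hM : 0 ≤ M) (c : ℕ → ℝ) (hc : ∀ i, |c i| ≤ M) :
    Tendsto (fun p => ∏ i ∈ Finset.range p,
        ((1 - T₁ ((normConst σ α₂ p * x - c i) / σ i)) *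
         (1 - T₂ ((normConst σ α₂ p * x - c i) / σ i))))
      atTop (nhds (Real.exp (-x ^ (-α₂)))) := by
  have hσ1 : ∀ i, C₁ ≤ σ i := fun i => (hσ i).1
  have hσ2 : ∀ i, σ i ≤ C₂ := fun i => (hσ i).2
  have hσpos : ∀ i, 0 < σ i := fun i => hC₁.trans_le (hσ1 i)
  have hC₂ : 0 < C₂ := hC₁.trans_le hC₁₂
  set a : ℕ → ℝ := fun p => normConst σ α₂ p with ha_def
  set t : ℕ → ℝ := fun p => a p * x with ht_def
  set u : ℕ → ℕ → ℝ := fun p i => (t p - c i) / σ i with hu_def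
  have haT : Tendsto a atTop atTop := normConst_tendsto_atTop hC₁ hσ1 hα₂
  have htT : Tendsto t atTop atTop := haT.atTop_mul_const hx
  -- unconditional sandwich for u
  have hu_sand : ∀ p i, (t p - M) / σ i ≤ u p i ∧ u p i ≤ (t p + M) / σ i := by
    intro p i
    have h := abs_le.mp (hc i)
    constructor
    · apply div_le_div_of_nonneg_right ?_ (hσpos i).le
      linarith [h.2]
    · apply div_le_div_of_nonneg_right ?_ (hσpos i).le
      linarith [h.1]
  -- sum identity
  have hsum : ∀ (β:ℝ), 0 < β → ∀ p, ∑ i ∈ Finset.range p, σ i ^ β = (normConst σ β p) ^ β := by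
    intro β hβ p
    have h0 : (0:ℝ) ≤ ∑ i ∈ Finset.range p, σ i ^ β :=
      Finset.sum_nonneg fun i _ => Real.rpow_nonneg (hσpos i).le _
    rw [normConst, ← Real.rpow_mul h0, one_div, inv_mul_cancel₀ hβ.ne', Real.rpow_one]
  set L : ℝ := x ^ (-α₂) with hL_def
  have hL : 0 < L := Real.rpow_pos_of_pos hx _
  -- limits of the ratio sequences
  have hfrac : ∀ (M' : ℝ), Tendsto (fun p => a p / (t p + M')) atTop (nhds x⁻¹) := by
    intro M'
    have hq : Tendsto (fun p => M' / a p) atTop (nhds 0) := tendsto_const_nhds.div_atTop haT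
    have h2 : Tendsto (fun p => x + M' / a p) atTop (nhds x) := by
      simpa using tendsto_const_nhds.add hq
    have h3 : Tendsto (fun p => (x + M' / a p)⁻¹) atTop (nhds x⁻¹) := h2.inv₀ hx.ne'
    apply h3.congr'
    filter_upwards [haT.eventually_gt_atTop 0] with p hp
    rw [ht_def]
    field_simp
  have hRU : Tendsto (fun p => (a p / (t p - M)) ^ α₂) atTop (nhds L) := by
    have := Filter.Tendsto.rpow_const (p := α₂) (hfrac (-M)) (Or.inl (inv_ne_zero hx.ne'))
    simp only [← sub_eq_add_neg] at this
    rwa [Real.inv_rpow hx.le, ← Real.rpow_neg hx.le] at this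
  have hRL : Tendsto (fun p => (a p / (t p + M)) ^ α₂) atTop (nhds L) := by
    have := Filter.Tendsto.rpow_const (p := α₂) (hfrac M) (Or.inl (inv_ne_zero hx.ne'))
    rwa [Real.inv_rpow hx.le, ← Real.rpow_neg hx.le] at this
  have hratio : Tendsto (fun p : ℕ => normConst σ α₁ p / a p) atTop (nhds 0) :=
    normConst_ratio_tendsto hC₁ hC₁₂ hσ hα₁ hα₂ hα
  have hR1 : Tendsto (fun p => (normConst σ α₁ p / (t p - M)) ^ α₁) atTop (nhds 0) := by
    have hbase : Tendsto (fun p => normConst σ α₁ p / (t p - M)) atTop (nhds 0) := by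
      have h0 : Tendsto (fun p => (normConst σ α₁ p / a p) * (a p / (t p - M))) atTop
          (nhds (0 * x⁻¹)) := by
        apply hratio.mul
        have := hfrac (-M); simpa [← sub_eq_add_neg] using this
      rw [zero_mul] at h0
      apply h0.congr'
      filter_upwards [haT.eventually_gt_atTop 0] with p hp
      field_simp
    have := Filter.Tendsto.rpow_const (p := α₁) hbase (Or.inr hα₁.le)
    rwa [Real.zero_rpow hα₁.ne'] at this
  set S : ℕ → ℝ := fun p => ∑ i ∈ Finset.range p,
      (-Real.log (1 - T₁ (u p i)) - Real.log (1 - T₂ (u p i))) with hS_def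
  have hS_nonneg : ∀ p, 0 ≤ S p := by
    intro p
    apply Finset.sum_nonneg
    intro i _
    have h1 := neg_log_nonneg (hT₁01 (u p i)).1 (hT₁01 (u p i)).2
    have h2 := neg_log_nonneg (hT₂01 (u p i)).1 (hT₂01 (u p i)).2
    linarith
  have hNC_nonneg : ∀ (β : ℝ) (p : ℕ), 0 ≤ normConst σ β p := by
    intro β p
    exact Real.rpow_nonneg (Finset.sum_nonneg fun i _ => Real.rpow_nonneg (hσpos i).le _) _
  have hbound : ∀ δ : ℝ, 0 < δ → δ < 1 → ∀ᶠ p in atTop,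
      ((1-δ) * (a p / (t p + M)) ^ α₂ ≤ S p ∧
       S p ≤ (1+δ)^2 * ((normConst σ α₁ p / (t p - M)) ^ α₁ + (a p / (t p - M)) ^ α₂)) ∧
      (∀ i, T₁ (u p i) < 1 ∧ T₂ (u p i) < 1) := by
    intro δ hδ0 hδ1
    have hδ1' : (0:ℝ) < 1 + δ := by linarith
    have hδq : (0:ℝ) < δ/(1+δ)^2 := by positivity
    have hsmall : ∀ᶠ y : ℝ in atTop, y ^ (-α₁) ≤ δ/(1+δ)^2 ∧ y ^ (-α₂) ≤ δ/(1+δ)^2 :=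
      ((tendsto_rpow_neg_atTop hα₁).eventually_le_const hδq).and
        ((tendsto_rpow_neg_atTop hα₂).eventually_le_const hδq)
    have hE := (tail_bounds hα₁ htail₁ hδ0).and ((tail_bounds hα₂ htail₂ hδ0).and hsmall)
    obtain ⟨Y, hY⟩ := eventually_atTop.mp hE
    have htM : Tendsto (fun p => (t p - M)/C₂) atTop atTop :=
      (tendsto_atTop_add_const_right atTop (-M) htT).atTop_div_const hC₂
    filter_upwards [htM.eventually_ge_atTop Y,
      (tendsto_atTop_add_const_right atTop (-M) htT).eventually_gt_atTop 0] with p hpY hp2'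
    have hp2 : 0 < t p - M := by linarith [hp2']
    have hpM : 0 < t p + M := by linarith
    have hu_pos : ∀ i, 0 < u p i :=
      fun i => lt_of_lt_of_le (div_pos hp2 (hσpos i)) (hu_sand p i).1
    have hu_geY : ∀ i, Y ≤ u p i := by
      intro i
      refine le_trans (le_trans hpY ?_) (hu_sand p i).1
      exact div_le_div_of_nonneg_left hp2.le (hσpos i) (hσ2 i)
    -- per-index facts
    have hfacts : ∀ i,
        T₁ (u p i) ≤ δ/(1+δ) ∧ T₂ (u p i) ≤ δ/(1+δ) ∧
        (u p i) ^ (-α₁) ≤ σ i ^ α₁ * (t p - M) ^ (-α₁) ∧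
        (u p i) ^ (-α₂) ≤ σ i ^ α₂ * (t p - M) ^ (-α₂) ∧
        σ i ^ α₂ * (t p + M) ^ (-α₂) ≤ (u p i) ^ (-α₂) ∧
        T₁ (u p i) ≤ (1+δ) * (u p i) ^ (-α₁) ∧
        T₂ (u p i) ≤ (1+δ) * (u p i) ^ (-α₂) ∧
        (1-δ) * (u p i) ^ (-α₂) ≤ T₂ (u p i) := by
      intro i
      obtain ⟨⟨hl1, hr1⟩, ⟨hl2, hr2⟩, hs1, hs2⟩ := hY (u p i) (hu_geY i)
      have key : (1+δ) * (δ/(1+δ)^2) = δ/(1+δ) := by field_simp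
      have hm1 : T₁ (u p i) ≤ δ/(1+δ) := by
        calc T₁ (u p i) ≤ (1+δ) * (u p i) ^ (-α₁) := hr1
          _ ≤ (1+δ) * (δ/(1+δ)^2) := by
              exact mul_le_mul_of_nonneg_left hs1 hδ1'.le
          _ = δ/(1+δ) := key
      have hm2 : T₂ (u p i) ≤ δ/(1+δ) := by
        calc T₂ (u p i) ≤ (1+δ) * (u p i) ^ (-α₂) := hr2
          _ ≤ (1+δ) * (δ/(1+δ)^2) := by
              exact mul_le_mul_of_nonneg_left hs2 hδ1'.le
          _ = δ/(1+δ) := key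
      have hub1 : (u p i) ^ (-α₁) ≤ σ i ^ α₁ * (t p - M) ^ (-α₁) := by
        rw [← div_rpow_neg hp2.le (hσpos i)]
        exact Real.rpow_le_rpow_of_nonpos (div_pos hp2 (hσpos i)) (hu_sand p i).1
          (neg_nonpos.mpr hα₁.le)
      have hub2 : (u p i) ^ (-α₂) ≤ σ i ^ α₂ * (t p - M) ^ (-α₂) := by
        rw [← div_rpow_neg hp2.le (hσpos i)]
        exact Real.rpow_le_rpow_of_nonpos (div_pos hp2 (hσpos i)) (hu_sand p i).1
          (neg_nonpos.mpr hα₂.le)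
      have hlb2 : σ i ^ α₂ * (t p + M) ^ (-α₂) ≤ (u p i) ^ (-α₂) := by
        rw [← div_rpow_neg hpM.le (hσpos i)]
        exact Real.rpow_le_rpow_of_nonpos (hu_pos i) (hu_sand p i).2 (neg_nonpos.mpr hα₂.le)
      exact ⟨hm1, hm2, hub1, hub2, hlb2, hr1, hr2, hl2⟩
    have hlt1 : δ/(1+δ) < 1 := (div_lt_one hδ1').mpr (by linarith)
    refine ⟨⟨?_, ?_⟩, fun i => ⟨lt_of_le_of_lt (hfacts i).1 hlt1,
      lt_of_le_of_lt (hfacts i).2.1 hlt1⟩⟩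
    · -- lower bound
      have hterm : ∀ i ∈ Finset.range p, (1-δ) * (σ i ^ α₂ * (t p + M) ^ (-α₂)) ≤
          -Real.log (1 - T₁ (u p i)) - Real.log (1 - T₂ (u p i)) := by
        intro i _
        obtain ⟨hm1, hm2, _, _, hlb2, _, _, hl2⟩ := hfacts i
        have h1 : 0 ≤ -Real.log (1 - T₁ (u p i)) :=
          neg_log_nonneg (hT₁01 (u p i)).1 (hT₁01 (u p i)).2
        have h2 : T₂ (u p i) ≤ -Real.log (1 - T₂ (u p i)) :=
          le_neg_log (lt_of_le_of_lt hm2 hlt1)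
        have h3 : (1-δ) * (σ i ^ α₂ * (t p + M) ^ (-α₂)) ≤ (1-δ) * (u p i) ^ (-α₂) :=
          mul_le_mul_of_nonneg_left hlb2 (by linarith)
        linarith
      calc (1-δ) * (a p / (t p + M)) ^ α₂
          = ∑ i ∈ Finset.range p, (1-δ) * (σ i ^ α₂ * (t p + M) ^ (-α₂)) := by
            rw [← Finset.mul_sum, ← Finset.sum_mul, hsum α₂ hα₂ p,
              div_rpow_eq (hNC_nonneg α₂ p) hpM]
        _ ≤ S p := Finset.sum_le_sum hterm
    · -- upper bound
      have hterm : ∀ i ∈ Finset.range p,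
          -Real.log (1 - T₁ (u p i)) - Real.log (1 - T₂ (u p i)) ≤
          (1+δ)^2 * (σ i ^ α₁ * (t p - M) ^ (-α₁) + σ i ^ α₂ * (t p - M) ^ (-α₂)) := by
        intro i _
        obtain ⟨hm1, hm2, hub1, hub2, _, hr1, hr2, _⟩ := hfacts i
        have h1 : -Real.log (1 - T₁ (u p i)) ≤ (1+δ) * T₁ (u p i) :=
          neg_log_le hδ0 (hT₁01 (u p i)).1 hm1
        have h2 : -Real.log (1 - T₂ (u p i)) ≤ (1+δ) * T₂ (u p i) :=
          neg_log_le hδ0 (hT₂01 (u p i)).1 hm2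
        have h3 : T₁ (u p i) ≤ (1+δ) * (σ i ^ α₁ * (t p - M) ^ (-α₁)) :=
          hr1.trans (mul_le_mul_of_nonneg_left hub1 hδ1'.le)
        have h4 : T₂ (u p i) ≤ (1+δ) * (σ i ^ α₂ * (t p - M) ^ (-α₂)) :=
          hr2.trans (mul_le_mul_of_nonneg_left hub2 hδ1'.le)
        have h5 : (1+δ) * T₁ (u p i) ≤ (1+δ) * ((1+δ) * (σ i ^ α₁ * (t p - M) ^ (-α₁))) :=
          mul_le_mul_of_nonneg_left h3 hδ1'.le
        have h6 : (1+δ) * T₂ (u p i) ≤ (1+δ) * ((1+δ) * (σ i ^ α₂ * (t p - M) ^ (-α₂))) :=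
          mul_le_mul_of_nonneg_left h4 hδ1'.le
        nlinarith [h1, h2, h5, h6]
      calc S p ≤ ∑ i ∈ Finset.range p,
            (1+δ)^2 * (σ i ^ α₁ * (t p - M) ^ (-α₁) + σ i ^ α₂ * (t p - M) ^ (-α₂)) :=
            Finset.sum_le_sum hterm
        _ = (1+δ)^2 * ((normConst σ α₁ p / (t p - M)) ^ α₁ + (a p / (t p - M)) ^ α₂) := by
            rw [← Finset.mul_sum, Finset.sum_add_distrib, ← Finset.sum_mul, ← Finset.sum_mul,
              hsum α₁ hα₁ p, hsum α₂ hα₂ p, div_rpow_eq (hNC_nonneg α₁ p) hp2,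
              div_rpow_eq (hNC_nonneg α₂ p) hp2]
  -- convergence of S
  have hS : Tendsto S atTop (nhds L) := by
    rw [tendsto_order]
    constructor
    · intro l hl
      rcases lt_or_ge l 0 with hneg | hpos
      · exact Eventually.of_forall fun p => lt_of_lt_of_le hneg (hS_nonneg p)
      · set δ : ℝ := min (1/2) ((L - l)/(2*L)) with hδ_def
        have hδ0 : 0 < δ := lt_min (by norm_num) (div_pos (by linarith) (by positivity))
        have hδ1 : δ < 1 := lt_of_le_of_lt (min_le_left _ _) (by norm_num)
        have hkey : l < (1-δ) * L := by
          have h1 : δ ≤ (L - l)/(2*L) := min_le_right _ _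
          have h2 : δ * (2*L) ≤ L - l := by
            rw [← le_div_iff₀ (by positivity)]
            exact h1
          nlinarith
        have hconv : Tendsto (fun p => (1-δ) * (a p / (t p + M)) ^ α₂) atTop
            (nhds ((1-δ) * L)) := hRL.const_mul _
        filter_upwards [hconv.eventually_const_lt hkey, hbound δ hδ0 hδ1] with p h1 h2
        exact lt_of_lt_of_le h1 h2.1.1
    · intro v hv
      set δ : ℝ := min (1/2) ((v - L)/(6*L + 6)) with hδ_def
      have hδ0 : 0 < δ := lt_min (by norm_num) (div_pos (by linarith) (by positivity))
      have hδ1 : δ < 1 := lt_of_le_of_lt (min_le_left _ _) (by norm_num)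
      have hkey : (1+δ)^2 * (0 + L) < v := by
        have h1 : δ ≤ (v - L)/(6*L + 6) := min_le_right _ _
        have h2 : δ * (6*L + 6) ≤ v - L := by
          rw [← le_div_iff₀ (by positivity)]
          exact h1
        have h3 : δ ≤ 1/2 := min_le_left _ _
        nlinarith
      have hconv : Tendsto
          (fun p => (1+δ)^2 * ((normConst σ α₁ p / (t p - M)) ^ α₁ + (a p / (t p - M)) ^ α₂))
          atTop (nhds ((1+δ)^2 * (0 + L))) := (hR1.add hRU).const_mul _
      filter_upwards [hconv.eventually_lt_const hkey, hbound δ hδ0 hδ1] with p h1 h2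
      exact lt_of_le_of_lt h2.1.2 h1
  -- product equals exp(-S p) eventually
  have hprod : ∀ᶠ p in atTop, ∏ i ∈ Finset.range p,
      ((1 - T₁ (u p i)) * (1 - T₂ (u p i))) = Real.exp (-(S p)) := by
    filter_upwards [hbound (1/2) (by norm_num) (by norm_num)] with p hp
    have hsum_eq : -(S p) = ∑ i ∈ Finset.range p,
        (Real.log (1 - T₁ (u p i)) + Real.log (1 - T₂ (u p i))) := by
      rw [hS_def, ← Finset.sum_neg_distrib]
      exact Finset.sum_congr rfl fun i _ => by ring
    rw [hsum_eq, Real.exp_sum]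
    apply Finset.prod_congr rfl
    intro i _
    have h1 : 0 < 1 - T₁ (u p i) := by linarith [(hp.2 i).1]
    have h2 : 0 < 1 - T₂ (u p i) := by linarith [(hp.2 i).2]
    rw [Real.exp_add, Real.exp_log h1, Real.exp_log h2]
  have hfinal : Tendsto (fun p => Real.exp (-(S p))) atTop (nhds (Real.exp (-L))) :=
    (Real.continuous_exp.tendsto _).comp hS.neg
  rw [hL_def] at hfinal
  exact hfinal.congr' (by filter_upwards [hprod] with p hp using hp.symm)

lemma measure_Qmax_eq
    {Ω : Type*} [MeasurableSpace Ω] (P : Measure Ω) [IsProbabilityMeasure P]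
    (d : ℕ) (Z : Ω → Fin d → ℝ) (hZm : Measurable Z)
    (f : ℕ → (Fin d → ℝ) → ℝ) (hfm : ∀ i, Measurable (f i))
    (σ : ℕ → ℝ) (hσpos : ∀ i, 0 < σ i)
    (ε₁ ε₂ : ℕ → Ω → ℝ) (hε₁m : ∀ i, Measurable (ε₁ i)) (hε₂m : ∀ i, Measurable (ε₂ i))
    (hindep : iIndepFun (m := fun i => mixCodomMeasurableSpace d i) (mixFun Z ε₁ ε₂) P)
    (X₁ X₂ : ℕ → Ω → ℝ)
    (hX₁ : ∀ i ω, X₁ i ω = f i (Z ω) + σ i * ε₁ i ω)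
    (hX₂ : ∀ i ω, X₂ i ω = f i (Z ω) + σ i * ε₂ i ω)
    (p : ℕ) (hp : 1 ≤ p) (r : ℝ) :
    P {ω | Qmax X₁ X₂ p p ω ≤ r} =
      ∫⁻ ω, ∏ i ∈ Finset.range p,
        (P {ω' | ε₁ i ω' ≤ (r - f i (Z ω)) / σ i} *
         P {ω' | ε₂ i ω' ≤ (r - f i (Z ω)) / σ i}) ∂P := by
  classical
  haveI : NeZero p := ⟨Nat.one_le_iff_ne_zero.mp hp⟩
  set κ := (Fin p ⊕ Fin p)
  set V : Ω → κ → ℝ := fun ω k => match k with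
    | Sum.inl i => ε₁ i ω
    | Sum.inr i => ε₂ i ω with hV_def
  set τ : κ → (Fin d → ℝ) → ℝ := fun k z => match k with
    | Sum.inl i => (r - f i z) / σ i
    | Sum.inr i => (r - f i z) / σ i with hτ_def
  have hτm : ∀ k, Measurable (τ k) := by
    rintro (i | i) <;> exact ((measurable_const.sub (hfm _)).div_const _)
  have hVm : Measurable V := by
    apply measurable_pi_lambda
    rintro (i | i)
    · exact hε₁m i
    · exact hε₂m i
  set A : Set ((Fin d → ℝ) × (κ → ℝ)) := {q | ∀ k, q.2 k ≤ τ k q.1} with hA_def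
  have hAm : MeasurableSet A := by
    have : A = ⋂ k, {q : (Fin d → ℝ) × (κ → ℝ) | q.2 k ≤ τ k q.1} := by
      ext q; simp [hA_def, Set.mem_iInter]
    rw [this]
    refine MeasurableSet.iInter fun k => measurableSet_le ?_ ?_
    · exact measurable_snd.eval
    · exact (hτm k).comp measurable_fst
  -- step 1 : the event as a preimage
  have hset : {ω | Qmax X₁ X₂ p p ω ≤ r} = (fun ω => (Z ω, V ω)) ⁻¹' A := by
    ext ω
    simp only [Set.mem_setOf_eq, Set.mem_preimage, hA_def, Qmax, max_le_iff]
    have hb1 : BddAbove (Set.range fun i : Fin p => X₁ i ω) := (Set.finite_range _).bddAbove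
    have hb2 : BddAbove (Set.range fun i : Fin p => X₂ i ω) := (Set.finite_range _).bddAbove
    rw [ciSup_le_iff hb1, ciSup_le_iff hb2]
    constructor
    · rintro ⟨h1, h2⟩ (i | i)
      · have := h1 i
        rw [hX₁] at this
        rw [le_div_iff₀ (hσpos i)]
        show ε₁ i ω * σ i ≤ r - f i (Z ω)
        nlinarith [this]
      · have := h2 i
        rw [hX₂] at this
        rw [le_div_iff₀ (hσpos i)]
        show ε₂ i ω * σ i ≤ r - f i (Z ω)
        nlinarith [this]
    · intro h
      constructor
      · intro i
        have := h (Sum.inl i)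
        rw [le_div_iff₀ (hσpos i)] at this
        rw [hX₁]
        nlinarith [this]
      · intro i
        have := h (Sum.inr i)
        rw [le_div_iff₀ (hσpos i)] at this
        rw [hX₂]
        nlinarith [this]
  -- step 2 : independence of Z and V
  set e : κ → (Unit ⊕ ℕ ⊕ ℕ) := fun k => match k with
    | Sum.inl i => Sum.inr (Sum.inl i.val)
    | Sum.inr i => Sum.inr (Sum.inr i.val) with he_def
  have he_inj : Function.Injective e := by
    rintro (i | i) (j | j) h <;>
      simp only [he_def, Sum.inr.injEq, Sum.inl.injEq, reduceCtorEq] at h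
    · exact congrArg Sum.inl (Fin.val_injective h)
    · exact congrArg Sum.inr (Fin.val_injective h)
  set Sfin : Finset (Unit ⊕ ℕ ⊕ ℕ) := {Sum.inl ()} with hSfin_def
  set Tfin : Finset (Unit ⊕ ℕ ⊕ ℕ) := (Finset.univ : Finset κ).image e with hTfin_def
  have hdisj : Disjoint Sfin Tfin := by
    rw [Finset.disjoint_left]
    intro a ha hb
    rw [hSfin_def, Finset.mem_singleton] at ha
    rw [hTfin_def, Finset.mem_image] at hb
    obtain ⟨k, _, hk⟩ := hb
    subst ha
    rcases k with i | i <;> simp [he_def] at hk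
  have hmix_meas : ∀ i, Measurable (mixFun Z ε₁ ε₂ i) := by
    rintro (u | i | i)
    · exact hZm
    · exact hε₁m i
    · exact hε₂m i
  have hIndep0 := hindep.indepFun_finset Sfin Tfin hdisj hmix_meas
  have hmemS : Sum.inl () ∈ Sfin := by simp [hSfin_def]
  have hmemT : ∀ k : κ, e k ∈ Tfin := fun k => Finset.mem_image_of_mem e (Finset.mem_univ k)
  set φ : (∀ i : Sfin, mixCodom d i) → (Fin d → ℝ) := fun g => g ⟨Sum.inl (), hmemS⟩ with hφ_def
  have hφm : Measurable φ := measurable_pi_apply _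
  set ψ : (∀ i : Tfin, mixCodom d i) → (κ → ℝ) := fun g k => match k with
    | Sum.inl i => g ⟨Sum.inr (Sum.inl i.val), hmemT (Sum.inl i)⟩
    | Sum.inr i => g ⟨Sum.inr (Sum.inr i.val), hmemT (Sum.inr i)⟩ with hψ_def
  have hψm : Measurable ψ := by
    apply measurable_pi_lambda
    rintro (i | i)
    · exact measurable_pi_apply _
    · exact measurable_pi_apply _
  have hZV : IndepFun Z V P := by
    have h := hIndep0.comp hφm hψm
    have h1 : (φ ∘ fun a (i : Sfin) => mixFun Z ε₁ ε₂ i a) = Z := rfl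
    have h2 : (ψ ∘ fun a (i : Tfin) => mixFun Z ε₁ ε₂ i a) = V := by
      funext ω
      funext k
      rcases k with i | i <;> rfl
    rwa [h1, h2] at h
  -- step 3 : compute the measure
  have hpair : Measurable fun ω => (Z ω, V ω) := hZm.prodMk hVm
  have hslice : ∀ z, (P.map V) (Prod.mk z ⁻¹' A) = ∏ i ∈ Finset.range p,
      (P {ω' | ε₁ i ω' ≤ (r - f i z) / σ i} * P {ω' | ε₂ i ω' ≤ (r - f i z) / σ i}) := by
    intro z
    have hsliceset : Prod.mk z ⁻¹' A = Set.pi Set.univ (fun k => Set.Iic (τ k z)) := by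
      ext v
      simp only [Set.mem_preimage, hA_def, Set.mem_setOf_eq, Set.mem_pi, Set.mem_univ,
        forall_true_left, Set.mem_Iic]
    set sets : ∀ i : (Unit ⊕ ℕ ⊕ ℕ), Set (mixCodom d i) := fun i => match i with
      | Sum.inl _ => Set.univ
      | Sum.inr (Sum.inl n) => (Set.Iic ((r - f n z) / σ n) : Set ℝ)
      | Sum.inr (Sum.inr n) => (Set.Iic ((r - f n z) / σ n) : Set ℝ)
      with hsets_def
    have hsets_meas : ∀ i ∈ Tfin, MeasurableSet (sets i) := by
      rintro (u | n | n) _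
      · exact MeasurableSet.univ
      · show MeasurableSet (Set.Iic ((r - f n z) / σ n) : Set ℝ)
        exact measurableSet_Iic
      · show MeasurableSet (Set.Iic ((r - f n z) / σ n) : Set ℝ)
        exact measurableSet_Iic
    have hpre : V ⁻¹' Set.pi Set.univ (fun k => Set.Iic (τ k z)) =
        ⋂ i ∈ Tfin, (mixFun Z ε₁ ε₂ i) ⁻¹' (sets i) := by
      ext ω
      simp only [Set.mem_preimage, Set.mem_pi, Set.mem_univ, forall_true_left, Set.mem_iInter]
      constructor
      · intro h i hi
        rw [hTfin_def, Finset.mem_image] at hi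
        obtain ⟨k, _, rfl⟩ := hi
        rcases k with i | i
        · exact h (Sum.inl i)
        · exact h (Sum.inr i)
      · intro h k
        rcases k with i | i
        · exact h (e (Sum.inl i)) (hmemT (Sum.inl i))
        · exact h (e (Sum.inr i)) (hmemT (Sum.inr i))
    rw [hsliceset, Measure.map_apply hVm (MeasurableSet.univ_pi fun k => measurableSet_Iic),
      hpre, hindep.measure_inter_preimage_eq_mul Tfin hsets_meas,
      hTfin_def, Finset.prod_image (fun a _ b _ h => he_inj h)]
    rw [Fintype.prod_sum_type]
    rw [← Finset.prod_mul_distrib, ← Fin.prod_univ_eq_prod_range]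
    rfl
  -- measurability of the integrand in z
  have hgm : Measurable (fun z : Fin d → ℝ => ∏ i ∈ Finset.range p,
      (P {ω' | ε₁ i ω' ≤ (r - f i z) / σ i} * P {ω' | ε₂ i ω' ≤ (r - f i z) / σ i})) := by
    apply Finset.measurable_prod
    intro i _
    have hmono1 : Monotone (fun y : ℝ => P {ω' | ε₁ i ω' ≤ y}) := fun y₁ y₂ h =>
      measure_mono fun ω' (hω : ε₁ i ω' ≤ y₁) => le_trans hω h
    have hmono2 : Monotone (fun y : ℝ => P {ω' | ε₂ i ω' ≤ y}) := fun y₁ y₂ h =>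
      measure_mono fun ω' (hω : ε₂ i ω' ≤ y₁) => le_trans hω h
    have hym : Measurable (fun z : Fin d → ℝ => (r - f i z) / σ i) :=
      (measurable_const.sub (hfm i)).div_const _
    exact (hmono1.measurable.comp hym).mul (hmono2.measurable.comp hym)
  calc P {ω | Qmax X₁ X₂ p p ω ≤ r}
      = P ((fun ω => (Z ω, V ω)) ⁻¹' A) := by rw [hset]
    _ = (P.map fun ω => (Z ω, V ω)) A := (Measure.map_apply hpair hAm).symm
    _ = ((P.map Z).prod (P.map V)) A := by
        rw [(indepFun_iff_map_prod_eq_prod_map_map hZm.aemeasurable hVm.aemeasurable).mp hZV]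
    _ = ∫⁻ z, (P.map V) (Prod.mk z ⁻¹' A) ∂(P.map Z) := Measure.prod_apply hAm
    _ = ∫⁻ z, (∏ i ∈ Finset.range p,
          (P {ω' | ε₁ i ω' ≤ (r - f i z) / σ i} *
           P {ω' | ε₂ i ω' ≤ (r - f i z) / σ i})) ∂(P.map Z) := lintegral_congr hslice
    _ = ∫⁻ ω, ∏ i ∈ Finset.range p,
          (P {ω' | ε₁ i ω' ≤ (r - f i (Z ω)) / σ i} *
           P {ω' | ε₂ i ω' ≤ (r - f i (Z ω)) / σ i}) ∂P := lintegral_map hgm hZm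

/-- Corollary 1, third case: if `α₁ > α₂` then `a_{1,p}/a_{2,p} → 0` and `P(Q_p ≤ a_{2,p} x) → Ψ_{α₂}(x)` for every `x > 0`. -/
theorem coro1_case3
    {Ω : Type*} [MeasurableSpace Ω] (P : Measure Ω) [IsProbabilityMeasure P]
    (d : ℕ) (Z : Ω → Fin d → ℝ) (hZm : Measurable Z)
    (f : ℕ → (Fin d → ℝ) → ℝ) (hfm : ∀ i, Measurable (f i))
    (hfbdd : ∀ᵐ ω ∂P, ∃ M : ℝ, ∀ i, |f i (Z ω)| ≤ M)
    (C₁ C₂ : ℝ) (hC₁ : 0 < C₁) (hC₁₂ : C₁ ≤ C₂)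
    (σ : ℕ → ℝ) (hσ : ∀ i, σ i ∈ Set.Icc C₁ C₂)
    (α₁ α₂ : ℝ) (hα₁ : 0 < α₁) (hα₂ : 0 < α₂)
    (ε₁ ε₂ : ℕ → Ω → ℝ) (hε₁m : ∀ i, Measurable (ε₁ i)) (hε₂m : ∀ i, Measurable (ε₂ i))
    (hid₁ : ∀ i, IdentDistrib (ε₁ i) (ε₁ 0) P P)
    (hid₂ : ∀ i, IdentDistrib (ε₂ i) (ε₂ 0) P P)
    (hindep : iIndepFun (m := fun i => mixCodomMeasurableSpace d i) (mixFun Z ε₁ ε₂) P)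
    (htail₁ : Tendsto (fun x : ℝ => x ^ α₁ * (P {ω | x < ε₁ 0 ω}).toReal) atTop (nhds 1))
    (htail₂ : Tendsto (fun x : ℝ => x ^ α₂ * (P {ω | x < ε₂ 0 ω}).toReal) atTop (nhds 1))
    (X₁ X₂ : ℕ → Ω → ℝ)
    (hX₁ : ∀ i ω, X₁ i ω = f i (Z ω) + σ i * ε₁ i ω)
    (hX₂ : ∀ i ω, X₂ i ω = f i (Z ω) + σ i * ε₂ i ω)
    (hα : α₂ < α₁) :
    Tendsto (fun p : ℕ => normConst σ α₁ p / normConst σ α₂ p) atTop (nhds 0) ∧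
    ∀ x : ℝ, 0 < x →
      Tendsto (fun p : ℕ => (P {ω | Qmax X₁ X₂ p p ω ≤ normConst σ α₂ p * x}).toReal) atTop (nhds (frechetCDF α₂ x)) := by
  have hσ1 : ∀ i, C₁ ≤ σ i := fun i => (hσ i).1
  have hσpos : ∀ i, 0 < σ i := fun i => hC₁.trans_le (hσ1 i)
  refine ⟨normConst_ratio_tendsto hC₁ hC₁₂ hσ hα₁ hα₂ hα, ?_⟩
  intro x hx
  set T₁r : ℝ → ℝ := fun y => (P {ω | y < ε₁ 0 ω}).toReal with hT₁r_def
  set T₂r : ℝ → ℝ := fun y => (P {ω | y < ε₂ 0 ω}).toReal with hT₂r_def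
  have hprob01 : ∀ s : Set Ω, (P s).toReal ∈ Set.Icc (0:ℝ) 1 := by
    intro s
    refine ⟨ENNReal.toReal_nonneg, ?_⟩
    have h := ENNReal.toReal_mono (measure_ne_top P Set.univ)
      (measure_mono (Set.subset_univ s))
    rwa [measure_univ, ENNReal.toReal_one] at h
  have hT₁01 : ∀ y, T₁r y ∈ Set.Icc (0:ℝ) 1 := fun y => hprob01 _
  have hT₂01 : ∀ y, T₂r y ∈ Set.Icc (0:ℝ) 1 := fun y => hprob01 _
  -- cdf identities
  have hcdf : ∀ (ε : ℕ → Ω → ℝ), (∀ i, Measurable (ε i)) →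
      (∀ i, IdentDistrib (ε i) (ε 0) P P) → ∀ (i : ℕ) (y : ℝ),
      P {ω' | ε i ω' ≤ y} = ENNReal.ofReal (1 - (P {ω | y < ε 0 ω}).toReal) := by
    intro ε hm hid i y
    have h1 : {ω' | ε i ω' ≤ y} = ε i ⁻¹' Set.Iic y := rfl
    have h2 : P (ε i ⁻¹' Set.Iic y) = P (ε 0 ⁻¹' Set.Iic y) :=
      (hid i).measure_mem_eq measurableSet_Iic
    have h3 : (ε 0 ⁻¹' Set.Iic y)ᶜ = {ω | y < ε 0 ω} := by
      ext ω; simp [not_le]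
    have h4 : P {ω | y < ε 0 ω} = 1 - P (ε 0 ⁻¹' Set.Iic y) := by
      rw [← h3, prob_compl_eq_one_sub (measurableSet_Iic.preimage (hm 0))]
    have h5 : (P {ω | y < ε 0 ω}).toReal = 1 - (P (ε 0 ⁻¹' Set.Iic y)).toReal := by
      rw [h4, ENNReal.toReal_sub_of_le prob_le_one ENNReal.one_ne_top, ENNReal.toReal_one]
    rw [h1, h2, h5]
    have : (1:ℝ) - (1 - (P (ε 0 ⁻¹' Set.Iic y)).toReal) = (P (ε 0 ⁻¹' Set.Iic y)).toReal := by
      ring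
    rw [this, ENNReal.ofReal_toReal (measure_ne_top P _)]
  -- the ENNReal integrand
  set G : ℕ → Ω → ℝ≥0∞ := fun p ω => ∏ i ∈ Finset.range p,
      (P {ω' | ε₁ i ω' ≤ (normConst σ α₂ p * x - f i (Z ω)) / σ i} *
       P {ω' | ε₂ i ω' ≤ (normConst σ α₂ p * x - f i (Z ω)) / σ i}) with hG_def
  have hG_ofReal : ∀ p ω, G p ω = ENNReal.ofReal (∏ i ∈ Finset.range p,
      ((1 - T₁r ((normConst σ α₂ p * x - f i (Z ω)) / σ i)) *
       (1 - T₂r ((normConst σ α₂ p * x - f i (Z ω)) / σ i)))) := by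
    intro p ω
    rw [hG_def, ENNReal.ofReal_prod_of_nonneg]
    · apply Finset.prod_congr rfl
      intro i _
      rw [hcdf ε₁ hε₁m hid₁ i _, hcdf ε₂ hε₂m hid₂ i _, ← ENNReal.ofReal_mul]
      have := (hT₁01 ((normConst σ α₂ p * x - f i (Z ω)) / σ i)).2
      linarith
    · intro i _
      have h1 := (hT₁01 ((normConst σ α₂ p * x - f i (Z ω)) / σ i)).2
      have h2 := (hT₂01 ((normConst σ α₂ p * x - f i (Z ω)) / σ i)).2
      nlinarith
  -- dominated convergence
  have hGm : ∀ p, Measurable (G p) := by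
    intro p
    rw [hG_def]
    apply Finset.measurable_prod
    intro i _
    have hmono1 : Monotone (fun y : ℝ => P {ω' | ε₁ i ω' ≤ y}) := fun y₁ y₂ h =>
      measure_mono fun ω' (hω : ε₁ i ω' ≤ y₁) => le_trans hω h
    have hmono2 : Monotone (fun y : ℝ => P {ω' | ε₂ i ω' ≤ y}) := fun y₁ y₂ h =>
      measure_mono fun ω' (hω : ε₂ i ω' ≤ y₁) => le_trans hω h
    have hym : Measurable (fun ω : Ω => (normConst σ α₂ p * x - f i (Z ω)) / σ i) :=
      (measurable_const.sub ((hfm i).comp hZm)).div_const _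
    exact (hmono1.measurable.comp hym).mul (hmono2.measurable.comp hym)
  have hGb : ∀ p, ∀ᵐ ω ∂P, G p ω ≤ (1 : ℝ≥0∞) := by
    intro p
    refine Eventually.of_forall fun ω => ?_
    rw [hG_def]
    exact Finset.prod_le_one' fun i _ => mul_le_one' prob_le_one prob_le_one
  have hGtend : ∀ᵐ ω ∂P, Tendsto (fun p => G p ω) atTop
      (nhds (ENNReal.ofReal (Real.exp (-x ^ (-α₂))))) := by
    filter_upwards [hfbdd] with ω hω
    obtain ⟨M, hM⟩ := hω
    have hM' : ∀ i, |f i (Z ω)| ≤ max M 0 := fun i => (hM i).trans (le_max_left _ _)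
    have hcore := core_prod_tendsto σ C₁ C₂ hC₁ hC₁₂ hσ α₁ α₂ hα₁ hα₂ hα T₁r T₂r hT₁01 hT₂01
      htail₁ htail₂ x (max M 0) hx (le_max_right _ _) (fun i => f i (Z ω)) hM'
    have := (ENNReal.continuous_ofReal.tendsto _).comp hcore
    exact this.congr fun p => (hG_ofReal p ω).symm
  have hDCT : Tendsto (fun p => ∫⁻ ω, G p ω ∂P) atTop
      (nhds (∫⁻ _ω, ENNReal.ofReal (Real.exp (-x ^ (-α₂))) ∂P)) := by
    refine tendsto_lintegral_of_dominated_convergence (fun _ => 1) hGm hGb ?_ hGtend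
    simp
  rw [lintegral_const, measure_univ, mul_one] at hDCT
  have hlim_ne : (ENNReal.ofReal (Real.exp (-x ^ (-α₂)))) ≠ ⊤ := ENNReal.ofReal_ne_top
  have hDCTr : Tendsto (fun p => (∫⁻ ω, G p ω ∂P).toReal) atTop
      (nhds (ENNReal.ofReal (Real.exp (-x ^ (-α₂)))).toReal) :=
    (ENNReal.tendsto_toReal hlim_ne).comp hDCT
  rw [ENNReal.toReal_ofReal (Real.exp_pos _).le] at hDCTr
  have hfre : frechetCDF α₂ x = Real.exp (-x ^ (-α₂)) := if_pos hx
  rw [hfre]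
  apply hDCTr.congr'
  filter_upwards [eventually_ge_atTop 1] with p hp
  rw [← measure_Qmax_eq P d Z hZm f hfm σ hσpos ε₁ ε₂ hε₁m hε₂m hindep X₁ X₂ hX₁ hX₂ p hp
      (normConst σ α₂ p * x)]
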